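/- (Right-handed Ackermann lemma.) Let p be a propositional variable, let θ₁,…,θ_n be L(@)^+-formulas not containing p, and let η₁ ≤ ι₁, …, η_m ≤ ι_m be inequalities of L(@)^+-formulas such that every occurrence of p in each η_j is positive and every occurrence of p in each ι_j is negative. Set θ := θ₁ ∨ … ∨ θ_n (with θ := ⊥ when n = 0). Then for every frame F = (W,R) and every valuation V: there exists a valuation V′ that agrees with V on all propositional variables other than p and on all nominals, such that (F,V′) ⊨ θ_i ≤ p for all 1 ≤ i ≤ n and (F,V′) ⊨ η_j ≤ ι_j for all 1 ≤ j ≤ m, if and only if (F,V) ⊨ η_j[θ/p] ≤ ι_j[θ/p] for all 1 ≤ j ≤ m, where [θ/p] denotes uniform substitution of θ for p. -/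

import Mathlib

/-- Formulas of the expanded hybrid language L(@)⁺: L(@) together with the
converse modalities ◆ (`bdia`) and ■ (`bbox`).  Propositional variables and
nominals are indexed by natural numbers. -/
inductive HFormP : Type
  | prop : ℕ → HFormP
  | nom : ℕ → HFormP
  | bot : HFormP
  | top : HFormP
  | neg : HFormP → HFormP
  | or : HFormP → HFormP → HFormP
  | and : HFormP → HFormP → HFormP
  | imp : HFormP → HFormP → HFormP
  | dia : HFormP → HFormP
  | box : HFormP → HFormP
  | at' : ℕ → HFormP → HFormP
  | bdia : HFormP → HFormP
  | bbox : HFormP → HFormP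

/-- Satisfaction in a model `(W, R, V)`, where the valuation is split into `Vp`
(for propositional variables) and `Vn` (assigning to each nominal the unique
world in its singleton truth set). -/
def sat {W : Type} (R : W → W → Prop) (Vp : ℕ → Set W) (Vn : ℕ → W) : W → HFormP → Prop
  | w, .prop p => w ∈ Vp p
  | w, .nom i => w = Vn i
  | _, .bot => False
  | _, .top => True
  | w, .neg φ => ¬ sat R Vp Vn w φ
  | w, .or φ ψ => sat R Vp Vn w φ ∨ sat R Vp Vn w ψ
  | w, .and φ ψ => sat R Vp Vn w φ ∧ sat R Vp Vn w ψ
  | w, .imp φ ψ => sat R Vp Vn w φ → sat R Vp Vn w ψ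
  | w, .dia φ => ∃ v, R w v ∧ sat R Vp Vn v φ
  | w, .box φ => ∀ v, R w v → sat R Vp Vn v φ
  | _, .at' i φ => sat R Vp Vn (Vn i) φ
  | w, .bdia φ => ∃ v, R v w ∧ sat R Vp Vn v φ
  | w, .bbox φ => ∀ v, R v w → sat R Vp Vn v φ

/-- The inequality `φ ≤ ψ` holds in a model iff the truth set of `φ` is
included in the truth set of `ψ`. -/
def leq {W : Type} (R : W → W → Prop) (Vp : ℕ → Set W) (Vn : ℕ → W) (φ ψ : HFormP) : Prop :=
  ∀ w : W, sat R Vp Vn w φ → sat R Vp Vn w ψ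

mutual
  /-- Every occurrence of the propositional variable p in the formula is
  positive (lies under an even number of polarity reversals: ¬ and the
  antecedent of → reverse polarity, all other connectives preserve it). -/
  def allPos (p : ℕ) : HFormP → Prop
    | .prop _ => True
    | .nom _ => True
    | .bot => True
    | .top => True
    | .neg φ => allNeg p φ
    | .or φ ψ => allPos p φ ∧ allPos p ψ
    | .and φ ψ => allPos p φ ∧ allPos p ψ
    | .imp φ ψ => allNeg p φ ∧ allPos p ψ
    | .dia φ => allPos p φ
    | .box φ => allPos p φ
    | .at' _ φ => allPos p φ
    | .bdia φ => allPos p φ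
    | .bbox φ => allPos p φ

  /-- Every occurrence of the propositional variable p in the formula is
  negative (lies under an odd number of polarity reversals). -/
  def allNeg (p : ℕ) : HFormP → Prop
    | .prop q => q ≠ p
    | .nom _ => True
    | .bot => True
    | .top => True
    | .neg φ => allPos p φ
    | .or φ ψ => allNeg p φ ∧ allNeg p ψ
    | .and φ ψ => allNeg p φ ∧ allNeg p ψ
    | .imp φ ψ => allPos p φ ∧ allNeg p ψ
    | .dia φ => allNeg p φ
    | .box φ => allNeg p φ
    | .at' _ φ => allNeg p φ
    | .bdia φ => allNeg p φ
    | .bbox φ => allNeg p φ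
end

/-- The propositional variable p occurs in the formula. -/
def propOccurs (p : ℕ) : HFormP → Prop
  | .prop q => q = p
  | .nom _ => False
  | .bot => False
  | .top => False
  | .neg φ => propOccurs p φ
  | .or φ ψ => propOccurs p φ ∨ propOccurs p ψ
  | .and φ ψ => propOccurs p φ ∨ propOccurs p ψ
  | .imp φ ψ => propOccurs p φ ∨ propOccurs p ψ
  | .dia φ => propOccurs p φ
  | .box φ => propOccurs p φ
  | .at' _ φ => propOccurs p φ
  | .bdia φ => propOccurs p φ
  | .bbox φ => propOccurs p φ

/-- Uniform substitution of the formula θ for the propositional variable p. -/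
def substProp (p : ℕ) (θ : HFormP) : HFormP → HFormP
  | .prop q => if q = p then θ else .prop q
  | .nom i => .nom i
  | .bot => .bot
  | .top => .top
  | .neg φ => .neg (substProp p θ φ)
  | .or φ ψ => .or (substProp p θ φ) (substProp p θ ψ)
  | .and φ ψ => .and (substProp p θ φ) (substProp p θ ψ)
  | .imp φ ψ => .imp (substProp p θ φ) (substProp p θ ψ)
  | .dia φ => .dia (substProp p θ φ)
  | .box φ => .box (substProp p θ φ)
  | .at' i φ => .at' i (substProp p θ φ)
  | .bdia φ => .bdia (substProp p θ φ)
  | .bbox φ => .bbox (substProp p θ φ)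

/-- Disjunction of a list of formulas; the empty disjunction is ⊥. -/
def bigOr : List HFormP → HFormP
  | [] => .bot
  | [φ] => φ
  | φ :: rest => .or φ (bigOr rest)

/-- Conjunction of a list of formulas; the empty conjunction is ⊤. -/
def bigAnd : List HFormP → HFormP
  | [] => .top
  | [φ] => φ
  | φ :: rest => .and φ (bigAnd rest)

lemma sat_congr {W : Type} (R : W → W → Prop) (Vn : ℕ → W) (p : ℕ)
    (Vp Vp' : ℕ → Set W) (h : ∀ q, q ≠ p → Vp q = Vp' q) :
    ∀ (φ : HFormP), ¬ propOccurs p φ → ∀ w, (sat R Vp Vn w φ ↔ sat R Vp' Vn w φ) := by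
  intro φ
  induction φ with
  | prop q => intro hq w; simp only [propOccurs] at hq; simp [sat, h q hq]
  | nom i => intro _ w; simp [sat]
  | bot => intro _ w; simp [sat]
  | top => intro _ w; simp [sat]
  | neg φ ih => intro hq w; simp only [propOccurs] at hq; simp [sat, ih hq w]
  | or φ ψ ih1 ih2 =>
      intro hq w; simp only [propOccurs] at hq
      simp [sat, ih1 (fun h => hq (Or.inl h)) w, ih2 (fun h => hq (Or.inr h)) w]
  | and φ ψ ih1 ih2 =>
      intro hq w; simp only [propOccurs] at hq
      simp [sat, ih1 (fun h => hq (Or.inl h)) w, ih2 (fun h => hq (Or.inr h)) w]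
  | imp φ ψ ih1 ih2 =>
      intro hq w; simp only [propOccurs] at hq
      simp [sat, ih1 (fun h => hq (Or.inl h)) w, ih2 (fun h => hq (Or.inr h)) w]
  | dia φ ih =>
      intro hq w; simp only [propOccurs] at hq
      simp only [sat]; exact exists_congr fun v => and_congr_right fun _ => ih hq v
  | box φ ih =>
      intro hq w; simp only [propOccurs] at hq
      simp only [sat]; exact forall_congr' fun v => imp_congr_right fun _ => ih hq v
  | at' i φ ih => intro hq w; simp only [propOccurs] at hq; simp only [sat]; exact ih hq _
  | bdia φ ih =>
      intro hq w; simp only [propOccurs] at hq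
      simp only [sat]; exact exists_congr fun v => and_congr_right fun _ => ih hq v
  | bbox φ ih =>
      intro hq w; simp only [propOccurs] at hq
      simp only [sat]; exact forall_congr' fun v => imp_congr_right fun _ => ih hq v

lemma sat_mono {W : Type} (R : W → W → Prop) (Vn : ℕ → W) (p : ℕ)
    (Vp Vp' : ℕ → Set W) (hagree : ∀ q, q ≠ p → Vp q = Vp' q)
    (hsub : Vp p ⊆ Vp' p) :
    ∀ (φ : HFormP) (w : W),
      (allPos p φ → sat R Vp Vn w φ → sat R Vp' Vn w φ) ∧
      (allNeg p φ → sat R Vp' Vn w φ → sat R Vp Vn w φ) := by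
  intro φ
  induction φ with
  | prop q =>
      intro w
      constructor
      · intro _ hw
        by_cases hq : q = p
        · subst hq; exact hsub hw
        · simpa [sat, hagree q hq] using hw
      · intro hq hw
        simp only [allNeg] at hq
        simpa [sat, hagree q hq] using hw
  | nom i => intro w; simp [sat]
  | bot => intro w; simp [sat]
  | top => intro w; simp [sat]
  | neg φ ih =>
      intro w
      simp only [allPos, allNeg, sat]
      exact ⟨fun h hw hc => hw ((ih w).2 h hc), fun h hw hc => hw ((ih w).1 h hc)⟩
  | or φ ψ ih1 ih2 =>
      intro w
      simp only [allPos, allNeg, sat]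
      exact ⟨fun h => Or.imp ((ih1 w).1 h.1) ((ih2 w).1 h.2),
             fun h => Or.imp ((ih1 w).2 h.1) ((ih2 w).2 h.2)⟩
  | and φ ψ ih1 ih2 =>
      intro w
      simp only [allPos, allNeg, sat]
      exact ⟨fun h => And.imp ((ih1 w).1 h.1) ((ih2 w).1 h.2),
             fun h => And.imp ((ih1 w).2 h.1) ((ih2 w).2 h.2)⟩
  | imp φ ψ ih1 ih2 =>
      intro w
      simp only [allPos, allNeg, sat]
      exact ⟨fun h hw hc => (ih2 w).1 h.2 (hw ((ih1 w).2 h.1 hc)),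
             fun h hw hc => (ih2 w).2 h.2 (hw ((ih1 w).1 h.1 hc))⟩
  | dia φ ih =>
      intro w
      simp only [allPos, allNeg, sat]
      exact ⟨fun h ⟨v, hv, hs⟩ => ⟨v, hv, (ih v).1 h hs⟩,
             fun h ⟨v, hv, hs⟩ => ⟨v, hv, (ih v).2 h hs⟩⟩
  | box φ ih =>
      intro w
      simp only [allPos, allNeg, sat]
      exact ⟨fun h hw v hv => (ih v).1 h (hw v hv),
             fun h hw v hv => (ih v).2 h (hw v hv)⟩
  | at' i φ ih =>
      intro w
      simp only [allPos, allNeg, sat]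
      exact ⟨fun h => (ih _).1 h, fun h => (ih _).2 h⟩
  | bdia φ ih =>
      intro w
      simp only [allPos, allNeg, sat]
      exact ⟨fun h ⟨v, hv, hs⟩ => ⟨v, hv, (ih v).1 h hs⟩,
             fun h ⟨v, hv, hs⟩ => ⟨v, hv, (ih v).2 h hs⟩⟩
  | bbox φ ih =>
      intro w
      simp only [allPos, allNeg, sat]
      exact ⟨fun h hw v hv => (ih v).1 h (hw v hv),
             fun h hw v hv => (ih v).2 h (hw v hv)⟩

lemma sat_subst {W : Type} (R : W → W → Prop) (Vn : ℕ → W) (p : ℕ) (θ : HFormP)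
    (Vp : ℕ → Set W) :
    ∀ (φ : HFormP) (w : W),
      sat R Vp Vn w (substProp p θ φ) ↔
      sat R (Function.update Vp p {v | sat R Vp Vn v θ}) Vn w φ := by
  intro φ
  induction φ with
  | prop q =>
      intro w
      by_cases hq : q = p
      · subst hq; simp [substProp, sat, Function.update_self]
      · simp [substProp, hq, sat, Function.update_of_ne hq]
  | nom i => intro w; simp [substProp, sat]
  | bot => intro w; simp [substProp, sat]
  | top => intro w; simp [substProp, sat]
  | neg φ ih => intro w; simp only [substProp, sat]; rw [ih w]
  | or φ ψ ih1 ih2 => intro w; simp only [substProp, sat]; rw [ih1 w, ih2 w]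
  | and φ ψ ih1 ih2 => intro w; simp only [substProp, sat]; rw [ih1 w, ih2 w]
  | imp φ ψ ih1 ih2 => intro w; simp only [substProp, sat]; rw [ih1 w, ih2 w]
  | dia φ ih =>
      intro w; simp only [substProp, sat]
      exact exists_congr fun v => and_congr_right fun _ => ih v
  | box φ ih =>
      intro w; simp only [substProp, sat]
      exact forall_congr' fun v => imp_congr_right fun _ => ih v
  | at' i φ ih => intro w; simp only [substProp, sat]; exact ih _
  | bdia φ ih =>
      intro w; simp only [substProp, sat]
      exact exists_congr fun v => and_congr_right fun _ => ih v
  | bbox φ ih =>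
      intro w; simp only [substProp, sat]
      exact forall_congr' fun v => imp_congr_right fun _ => ih v

lemma sat_bigOr {W : Type} (R : W → W → Prop) (Vp : ℕ → Set W) (Vn : ℕ → W) :
    ∀ (L : List HFormP) (w : W),
      sat R Vp Vn w (bigOr L) ↔ ∃ φ ∈ L, sat R Vp Vn w φ := by
  intro L
  induction L with
  | nil => intro w; simp [bigOr, sat]
  | cons φ rest ih =>
      intro w
      cases rest with
      | nil => simp [bigOr]
      | cons ψ rest' =>
          simp only [bigOr, sat]
          rw [ih w]
          simp

/-- Right-handed Ackermann lemma.  Let p be a propositional variable,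
θ₁,…,θₙ L(@)⁺-formulas not containing p, and η₁ ≤ ι₁, …, η_m ≤ ι_m
inequalities with each ηⱼ positive in p and each ιⱼ negative in p.  Let
θ := θ₁ ∨ … ∨ θₙ (θ := ⊥ when n = 0).  Then for every frame (W,R) and
valuation (Vp,Vn): there is a valuation Vp' agreeing with Vp on every
propositional variable other than p (the nominal part Vn being unchanged)
such that θᵢ ≤ p and ηⱼ ≤ ιⱼ all hold in (W,R,Vp',Vn), iff
ηⱼ[θ/p] ≤ ιⱼ[θ/p] holds in (W,R,Vp,Vn) for all j. -/
theorem right_handed_ackermann {W : Type} (hW : Nonempty W) (R : W → W → Prop)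
    (p : ℕ) (n m : ℕ) (θs : Fin n → HFormP) (ηs ιs : Fin m → HFormP)
    (hθ : ∀ i : Fin n, ¬ propOccurs p (θs i))
    (hη : ∀ j : Fin m, allPos p (ηs j))
    (hι : ∀ j : Fin m, allNeg p (ιs j))
    (Vp : ℕ → Set W) (Vn : ℕ → W) :
    (∃ Vp' : ℕ → Set W, (∀ q : ℕ, q ≠ p → Vp' q = Vp q) ∧
        (∀ i : Fin n, leq R Vp' Vn (θs i) (.prop p)) ∧
        (∀ j : Fin m, leq R Vp' Vn (ηs j) (ιs j))) ↔
    (∀ j : Fin m,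
        leq R Vp Vn (substProp p (bigOr (List.ofFn θs)) (ηs j))
          (substProp p (bigOr (List.ofFn θs)) (ιs j))) := by
  set θ := bigOr (List.ofFn θs) with hθdef
  set T : Set W := {v | sat R Vp Vn v θ} with hTdef
  constructor
  · rintro ⟨Vp', hag, hθp, hηι⟩ j w hw
    have hagU : ∀ q, q ≠ p → Function.update Vp p T q = Vp' q := by
      intro q hq; rw [Function.update_of_ne hq, ← hag q hq]
    have hsubU : Function.update Vp p T p ⊆ Vp' p := by
      rw [Function.update_self]
      intro v hv
      rw [hTdef, Set.mem_setOf_eq, sat_bigOr] at hv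
      obtain ⟨φ, hφ, hs⟩ := hv
      obtain ⟨i, rfl⟩ := List.mem_ofFn.mp hφ
      have hs' : sat R Vp' Vn v (θs i) :=
        (sat_congr R Vn p Vp Vp' (fun q hq => (hag q hq).symm) (θs i) (hθ i) v).mp hs
      exact hθp i v hs'
    have h1 : sat R (Function.update Vp p T) Vn w (ηs j) :=
      (sat_subst R Vn p θ Vp (ηs j) w).mp hw
    have h2 : sat R Vp' Vn w (ηs j) :=
      (sat_mono R Vn p (Function.update Vp p T) Vp' hagU hsubU (ηs j) w).1 (hη j) h1
    have h3 : sat R Vp' Vn w (ιs j) := hηι j w h2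
    have h4 : sat R (Function.update Vp p T) Vn w (ιs j) :=
      (sat_mono R Vn p (Function.update Vp p T) Vp' hagU hsubU (ιs j) w).2 (hι j) h3
    exact (sat_subst R Vn p θ Vp (ιs j) w).mpr h4
  · intro h
    refine ⟨Function.update Vp p T, fun q hq => Function.update_of_ne hq _ _, ?_, ?_⟩
    · intro i w hw
      have hw' : sat R Vp Vn w (θs i) :=
        (sat_congr R Vn p (Function.update Vp p T) Vp
          (fun q hq => Function.update_of_ne hq _ _) (θs i) (hθ i) w).mp hw
      have : sat R Vp Vn w θ := by
        rw [hθdef, sat_bigOr]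
        exact ⟨θs i, List.mem_ofFn.mpr ⟨i, rfl⟩, hw'⟩
      show w ∈ Function.update Vp p T p
      rw [Function.update_self]; exact this
    · intro j w hw
      have h1 : sat R Vp Vn w (substProp p θ (ηs j)) :=
        (sat_subst R Vn p θ Vp (ηs j) w).mpr hw
      have h2 := h j w h1
      exact (sat_subst R Vn p θ Vp (ιs j) w).mp h2
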